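/- Let V be a finite set, 𝒳_i finite nonempty sets for i∈V, and p a strictly positive pmf on ∏_{i∈V}𝒳_i. Let D_1 be a DAG on V containing a directed edge a→b that is covered, i.e., Pa_{D_1}({b}) = Pa_{D_1}({a}) ∪ {a}, and let D_2 be the graph obtained from D_1 by replacing a→b with b→a. Then D_2 is a DAG, and for every configuration v, ∏_{i∈V} p(v_i | v_{Pa_{D_1}(i)}) = ∏_{i∈V} p(v_i | v_{Pa_{D_2}(i)}). -/

import Mathlib

open scoped Classical

/-- A partially directed graph on vertex type `V`: directed edges `dir i j` (i→j) and
undirected edges `undir i j` (i—j), with at most one edge between any two vertices. -/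
structure PDG (V : Type) where
  dir : V → V → Prop
  undir : V → V → Prop
  undir_symm : ∀ i j, undir i j → undir j i
  undir_irrefl : ∀ i, ¬ undir i i
  dir_irrefl : ∀ i, ¬ dir i i
  not_dir_dir : ∀ i j, dir i j → ¬ dir j i
  not_dir_undir : ∀ i j, dir i j → ¬ undir i j

namespace PDG

variable {V : Type}

/-- Adjacency: joined by some edge. -/
def Adj (G : PDG V) (i j : V) : Prop := G.dir i j ∨ G.dir j i ∨ G.undir i j

/-- A semi-directed step from `i` to `j`: an undirected edge or a directed edge `i→j`. -/
def SStep (G : PDG V) (i j : V) : Prop := G.dir i j ∨ G.undir i j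

/-- Existence of a semi-directed cycle: `f 0, …, f m` with `f 0 = f m`, `m ≥ 2`,
each consecutive pair a semi-directed step, at least one step directed. -/
def HasSemiDirectedCycle (G : PDG V) : Prop :=
  ∃ (m : ℕ) (f : ℕ → V), 2 ≤ m ∧ f 0 = f m ∧
    (∀ i < m, G.SStep (f i) (f (i + 1))) ∧ (∃ i < m, G.dir (f i) (f (i + 1)))

/-- Strictly acyclic: no semi-directed cycle. -/
def StrictlyAcyclic (G : PDG V) : Prop := ¬ G.HasSemiDirectedCycle

/-- Joined by a path of undirected edges (possibly trivial). -/
def sameChain (G : PDG V) (i j : V) : Prop := Relation.ReflTransGen G.undir i j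

/-- The chain component of a vertex. -/
def chainComp (G : PDG V) (i : V) : Set V := {j | G.sameChain i j}

/-- Parents of a vertex set. -/
def Pa (G : PDG V) (D : Set V) : Set V := {i | ∃ d ∈ D, G.dir i d}

/-- Ancestors of a vertex set (directed path, possibly of length 0). -/
def An (G : PDG V) (D : Set V) : Set V := {i | ∃ d ∈ D, Relation.ReflTransGen G.dir i d}

/-- A DAG: only directed edges, and no directed cycles. -/
def IsDAG (G : PDG V) : Prop :=
  (∀ i j, ¬ G.undir i j) ∧ ∀ i, ¬ Relation.TransGen G.dir i i

/-- Unshielded collider `(i, k, j)`: `i→k ← j` with `i`, `j` distinct and non-adjacent. -/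
def UC (G : PDG V) (i k j : V) : Prop :=
  i ≠ j ∧ G.dir i k ∧ G.dir j k ∧ ¬ G.Adj i j

/-- `D ∈ [G]`: `D` is a DAG with the same skeleton as `G`, containing every directed edge
of `G`, all of whose unshielded colliders are unshielded colliders of `G`. -/
def InClass (D G : PDG V) : Prop :=
  D.IsDAG ∧ (∀ i j, D.Adj i j ↔ G.Adj i j) ∧ (∀ i j, G.dir i j → D.dir i j) ∧
    (∀ i k j, D.UC i k j → G.UC i k j)

/-- `C` is a nonempty set, connected by undirected edges within `C`, receiving a directed
edge from `I` and one from `J`. -/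
def ComplexCand (G : PDG V) (I : V) (C : Set V) (J : V) : Prop :=
  C.Nonempty ∧
  (∀ a ∈ C, ∀ b ∈ C,
    Relation.ReflTransGen (fun x y => G.undir x y ∧ x ∈ C ∧ y ∈ C) a b) ∧
  (∃ c ∈ C, G.dir I c) ∧ (∃ c ∈ C, G.dir J c)

/-- Minimal complex `(I, C, J)` of `G`. -/
def MinimalComplex (G : PDG V) (I : V) (C : Set V) (J : V) : Prop :=
  I ≠ J ∧ ¬ G.Adj I J ∧ (∀ a ∈ C, ∀ b ∈ C, G.sameChain a b) ∧
  G.ComplexCand I C J ∧ ∀ C' ⊂ C, ¬ G.ComplexCand I C' J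

/-- Remove all directed edges pointing into `S`. -/
def removeInto (G : PDG V) (S : Set V) : PDG V where
  dir i j := G.dir i j ∧ j ∉ S
  undir := G.undir
  undir_symm := G.undir_symm
  undir_irrefl := G.undir_irrefl
  dir_irrefl i h := G.dir_irrefl i h.1
  not_dir_dir i j h h' := G.not_dir_dir i j h.1 h'.1
  not_dir_undir i j h h' := G.not_dir_undir i j h.1 h'

/-- Induced subgraph on the vertex set `D` (kept on the same vertex type; edges
outside `D` are discarded). -/
def induce (G : PDG V) (D : Set V) : PDG V where
  dir i j := G.dir i j ∧ i ∈ D ∧ j ∈ D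
  undir i j := G.undir i j ∧ i ∈ D ∧ j ∈ D
  undir_symm i j h := ⟨G.undir_symm i j h.1, h.2.2, h.2.1⟩
  undir_irrefl i h := G.undir_irrefl i h.1
  dir_irrefl i h := G.dir_irrefl i h.1
  not_dir_dir i j h h' := G.not_dir_dir i j h.1 h'.1
  not_dir_undir i j h h' := G.not_dir_undir i j h.1 h'.1

/-- `G(↛X)`: `G` with every directed edge into `X ∩ An_G(Y)` removed. -/
def noInto (G : PDG V) (X Y : Set V) : PDG V := G.removeInto (X ∩ G.An Y)

/-- `RM(G; X, Y)`: the induced subgraph of `G(↛X)` on `An_{G(↛X)}(Y)`. -/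
def RM (G : PDG V) (X Y : Set V) : PDG V :=
  (G.noInto X Y).induce ((G.noInto X Y).An Y)

/-- There is a proper semi-directed path from `X` to `Y` starting with an undirected
edge: distinct vertices `f 0 ∈ X, …, f m ∈ Y`, only `f 0` in `X`, each consecutive pair a
semi-directed step, the first edge undirected. -/
def HasProperUndirStartPath (G : PDG V) (X Y : Set V) : Prop :=
  ∃ (m : ℕ) (f : ℕ → V), 1 ≤ m ∧
    (∀ i ≤ m, ∀ j ≤ m, f i = f j → i = j) ∧
    f 0 ∈ X ∧ f m ∈ Y ∧ (∀ i < m, G.SStep (f i) (f (i + 1))) ∧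
    (∀ i, 1 ≤ i → i ≤ m → f i ∉ X) ∧ G.undir (f 0) (f 1)

/-- Membership in the chain decomposition `CD_G(D)`: the nonempty intersections of `D`
with chain components of `G`. -/
def CDmem (G : PDG V) (D S : Set V) : Prop :=
  S.Nonempty ∧ ∃ i, S = D ∩ G.chainComp i

end PDG

noncomputable section Prob

open PDG

variable {V : Type} [Fintype V] [DecidableEq V] {𝒳 : V → Type} [∀ i, Fintype (𝒳 i)]
  [∀ i, Nonempty (𝒳 i)]

/-- Marginal `p_S(v_S)`: sum of `p` over configurations agreeing with `v` on `S`. -/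
def marginal (p : (∀ i, 𝒳 i) → ℝ) (S : Set V) (v : ∀ i, 𝒳 i) : ℝ :=
  ∑ w : ∀ i, 𝒳 i, if ∀ i ∈ S, w i = v i then p w else 0

/-- Conditional `p(v_A | v_S) = p_{A∪S}(v_{A∪S}) / p_S(v_S)`. -/
def condP (p : (∀ i, 𝒳 i) → ℝ) (A S : Set V) (v : ∀ i, 𝒳 i) : ℝ :=
  marginal p (A ∪ S) v / marginal p S v

/-- A strictly positive pmf. -/
def IsPositivePMF (p : (∀ i, 𝒳 i) → ℝ) : Prop :=
  (∀ v, 0 < p v) ∧ ∑ v : ∀ i, 𝒳 i, p v = 1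

/-- `p` factorizes according to the DAG `D`. -/
def FactorizesDAG (p : (∀ i, 𝒳 i) → ℝ) (D : PDG V) : Prop :=
  ∀ v, p v = ∏ i : V, condP p {i} (D.Pa {i}) v

/-- The (finitely many) chain components of `G`. -/
def chainComponents (G : PDG V) : Finset (Set V) :=
  Finset.univ.image (fun i => G.chainComp i)

/-- The outer chain-graph factorization `∏_τ p(v_τ | v_{Pa_G(τ)})` over chain
components `τ` of `G`. -/
def chainProd (G : PDG V) (p : (∀ i, 𝒳 i) → ℝ) (v : ∀ i, 𝒳 i) : ℝ :=
  ∏ τ ∈ chainComponents G, condP p τ (G.Pa τ) v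

/-- The product `∏_j p(v_{D_j} | v_{Pa_G(D_j)})` over the chain decomposition
`CD_G(D) = {D_1,…,D_k}` (empty intersections contribute a factor `1`). -/
def cdProd (G : PDG V) (p : (∀ i, 𝒳 i) → ℝ) (D : Set V) (v : ∀ i, 𝒳 i) : ℝ :=
  ∏ τ ∈ chainComponents G, condP p (D ∩ τ) (G.Pa (D ∩ τ)) v

/-- The identification formula (g-formula) of Perković's theorem:
`Σ_b ∏_j p(b_j | pa_G(B_j))` where `{B_1,…,B_k} = CD_G(An_{G_{V∖X}}(Y))`,
the sum running over configurations of `B = An_{G_{V∖X}}(Y) ∖ Y`, all other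
coordinates (in particular the intervened values on `X` and the values on `Y`)
being fixed by `v`. -/
def gFormula (G : PDG V) (p : (∀ i, 𝒳 i) → ℝ) (X Y : Set V) (v : ∀ i, 𝒳 i) : ℝ :=
  ∑ w : ∀ i, 𝒳 i,
    if ∀ i, i ∉ (G.induce Xᶜ).An Y \ Y → w i = v i then
      cdProd G p ((G.induce Xᶜ).An Y) w
    else 0

/-- The re-weighting formula `Σ_{v'} p(v) / ∏_j p(x_j | pa_G(X_j))`, where
`{X_1,…,X_m} = CD_G(X ∩ An_G(Y))` and the sum runs over configurations of
`V ∖ (X ∪ Y)`, the coordinates on `X ∪ Y` being fixed by `v`. -/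
def rwFormula (G : PDG V) (p : (∀ i, 𝒳 i) → ℝ) (X Y : Set V) (v : ∀ i, 𝒳 i) : ℝ :=
  ∑ w : ∀ i, 𝒳 i,
    if ∀ i ∈ X ∪ Y, w i = v i then p w / cdProd G p (X ∩ G.An Y) w else 0

/-- The `Y`-marginal of the truncated factorization of `p` with respect to the DAG `D`:
`Σ_{v_{V∖(X∪Y)}} ∏_{i ∈ V∖X} p(v_i | v_{Pa_D(i)})`, the coordinates on `X ∪ Y` being
fixed by `v`. -/
def truncMarg (D : PDG V) (p : (∀ i, 𝒳 i) → ℝ) (X Y : Set V) (v : ∀ i, 𝒳 i) : ℝ :=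
  ∑ w : ∀ i, 𝒳 i,
    if ∀ i ∈ X ∪ Y, w i = v i then
      ∏ i ∈ Finset.univ.filter (fun i => i ∉ X), condP p {i} (D.Pa {i}) w
    else 0

end Prob

lemma marginal_pos {V : Type} [Fintype V] [DecidableEq V] {𝒳 : V → Type}
    [∀ i, Fintype (𝒳 i)] [∀ i, Nonempty (𝒳 i)]
    {p : (∀ i, 𝒳 i) → ℝ} (hp : ∀ v, 0 < p v) (S : Set V) (v : ∀ i, 𝒳 i) :
    0 < marginal p S v := by
  have h1 : p v ≤ marginal p S v := by
    have := Finset.single_le_sum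
      (f := fun w : ∀ i, 𝒳 i => if ∀ i ∈ S, w i = v i then p w else 0)
      (fun w _ => by
        show (0:ℝ) ≤ if ∀ i ∈ S, w i = v i then p w else 0
        by_cases h : ∀ i ∈ S, w i = v i
        · rw [if_pos h]; exact (hp w).le
        · rw [if_neg h]) (Finset.mem_univ v)
    simpa [marginal] using this
  exact lt_of_lt_of_le (hp v) h1

lemma Pa_singleton {V : Type} (G : PDG V) (x : V) :
    G.Pa {x} = {i | G.dir i x} := by
  ext i; simp [PDG.Pa]

/-- Reversing a covered edge `a→b` of a DAG `D₁` yields a DAG `D₂`, and the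
DAG factorizations of any strictly positive pmf with respect to `D₁` and `D₂` have the
same evaluation at every configuration. -/
theorem stmt8 {V : Type} [Fintype V] [DecidableEq V]
    (𝒳 : V → Type) [∀ i, Fintype (𝒳 i)] [∀ i, Nonempty (𝒳 i)]
    (p : (∀ i, 𝒳 i) → ℝ) (hp : IsPositivePMF p)
    (D₁ D₂ : PDG V) (h₁ : D₁.IsDAG) (a b : V)
    (hab : D₁.dir a b)
    (hcov : D₁.Pa {b} = D₁.Pa {a} ∪ {a})
    (h₂undir : ∀ i j : V, ¬ D₂.undir i j)
    (h₂dir : ∀ i j : V, D₂.dir i j ↔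
      ((D₁.dir i j ∧ ¬(i = a ∧ j = b)) ∨ (i = b ∧ j = a))) :
    D₂.IsDAG ∧
      ∀ v : ∀ i, 𝒳 i,
        ∏ i : V, condP p {i} (D₁.Pa {i}) v = ∏ i : V, condP p {i} (D₂.Pa {i}) v := by
  have hne : a ≠ b := fun h => D₁.dir_irrefl a (h ▸ hab)
  have haa : ¬ D₁.dir a a := D₁.dir_irrefl a
  have hcov' : ∀ i, D₁.dir i b ↔ (D₁.dir i a ∨ i = a) := by
    intro i
    have h1 : i ∈ D₁.Pa {b} ↔ i ∈ D₁.Pa {a} ∪ {a} := by rw [hcov]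
    simp only [Pa_singleton, Set.mem_union, Set.mem_setOf_eq,
      Set.mem_singleton_iff] at h1
    tauto
  -- S : the directed edges of D₁ kept in D₂
  set S : V → V → Prop := fun x y => D₁.dir x y ∧ ¬(x = a ∧ y = b) with hSdef
  have hSsub : ∀ x y, S x y → D₁.dir x y := fun x y h => h.1
  have hab_not : ¬ Relation.ReflTransGen S a b := by
    intro h
    rcases Relation.ReflTransGen.cases_tail h with h0 | ⟨c, hac, hcb⟩
    · exact hne h0.symm
    · rcases (hcov' c).1 hcb.1 with hca | hca
      · exact h₁.2 a (Relation.TransGen.tail' (Relation.ReflTransGen.mono hSsub _ _ hac) hca)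
      · exact hcb.2 ⟨hca, rfl⟩
  have hB : ∀ x y, Relation.ReflTransGen D₂.dir x y →
      Relation.ReflTransGen S x y ∨
      (Relation.ReflTransGen S x b ∧ Relation.ReflTransGen S a y) := by
    intro x y h
    induction h with
    | refl => exact Or.inl Relation.ReflTransGen.refl
    | @tail m z hxm hedge ih =>
      rcases (h₂dir m z).1 hedge with hS' | ⟨hm, hz⟩
      · rcases ih with hxm' | ⟨hxb, ham⟩
        · exact Or.inl (hxm'.tail hS')
        · exact Or.inr ⟨hxb, ham.tail hS'⟩
      · subst hm; subst hz
        rcases ih with hxm' | ⟨hxb, -⟩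
        · exact Or.inr ⟨hxm', Relation.ReflTransGen.refl⟩
        · exact Or.inr ⟨hxb, Relation.ReflTransGen.refl⟩
  have hDAG2 : D₂.IsDAG := by
    refine ⟨h₂undir, ?_⟩
    intro i hcyc
    obtain ⟨c, hic, hci⟩ := Relation.TransGen.head'_iff.1 hcyc
    rcases (h₂dir i c).1 hic with hS' | ⟨hi, hc⟩
    · rcases hB c i hci with hci'' | ⟨hcb, hai⟩
      · exact h₁.2 i (Relation.TransGen.mono hSsub _ _ (Relation.TransGen.head' (r := S) hS' hci''))
      · exact hab_not ((hai.tail hS').trans hcb)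
    · have hci2 : Relation.ReflTransGen D₂.dir a b := by
        rw [← hc, ← hi]; exact hci
      rcases hB a b hci2 with h' | ⟨h', -⟩ <;> exact hab_not h'
  refine ⟨hDAG2, ?_⟩
  -- parent sets of D₂
  have hPa2a : D₂.Pa {a} = D₁.Pa {a} ∪ {b} := by
    rw [Pa_singleton, Pa_singleton]
    ext i
    constructor
    · intro hi
      rcases (h₂dir i a).1 hi with ⟨h', -⟩ | ⟨h', -⟩
      · exact Or.inl h'
      · exact Or.inr h'
    · rintro (hi | hi)
      · exact (h₂dir i a).2 (Or.inl ⟨hi, fun hcon => hne hcon.2⟩)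
      · exact (h₂dir i a).2 (Or.inr ⟨hi, rfl⟩)
  have hPa2b : D₂.Pa {b} = D₁.Pa {a} := by
    rw [Pa_singleton, Pa_singleton]
    ext i
    show D₂.dir i b ↔ D₁.dir i a
    rw [h₂dir]
    constructor
    · rintro (⟨h', hn⟩ | ⟨-, h'⟩)
      · rcases (hcov' i).1 h' with h'' | h''
        · exact h''
        · exact absurd ⟨h'', rfl⟩ hn
      · exact absurd h' hne.symm
    · intro h'
      have hia : i ≠ a := fun hh => haa (hh ▸ h')
      exact Or.inl ⟨(hcov' i).2 (Or.inl h'), fun hcon => hia hcon.1⟩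
  have hPa2i : ∀ i, i ≠ a → i ≠ b → D₂.Pa {i} = D₁.Pa {i} := by
    intro i hia hib
    rw [Pa_singleton, Pa_singleton]
    ext j
    show D₂.dir j i ↔ D₁.dir j i
    rw [h₂dir]
    constructor
    · rintro (⟨h', -⟩ | ⟨-, h'⟩)
      · exact h'
      · exact absurd h' hia
    · intro h'
      exact Or.inl ⟨h', fun hcon => hib hcon.2⟩
  intro v
  -- split off the factors at a and b
  have hbmem : b ∈ Finset.univ.erase a := Finset.mem_erase.2 ⟨hne.symm, Finset.mem_univ b⟩
  rw [← Finset.mul_prod_erase Finset.univ (fun i => condP p {i} (D₁.Pa {i}) v)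
      (Finset.mem_univ a),
    ← Finset.mul_prod_erase (Finset.univ.erase a) (fun i => condP p {i} (D₁.Pa {i}) v) hbmem,
    ← Finset.mul_prod_erase Finset.univ (fun i => condP p {i} (D₂.Pa {i}) v)
      (Finset.mem_univ a),
    ← Finset.mul_prod_erase (Finset.univ.erase a) (fun i => condP p {i} (D₂.Pa {i}) v) hbmem]
  have hrest : ∏ i ∈ (Finset.univ.erase a).erase b, condP p {i} (D₁.Pa {i}) v
      = ∏ i ∈ (Finset.univ.erase a).erase b, condP p {i} (D₂.Pa {i}) v := by
    refine Finset.prod_congr rfl (fun i hi => ?_)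
    rcases Finset.mem_erase.1 hi with ⟨hib, hi'⟩
    rcases Finset.mem_erase.1 hi' with ⟨hia, -⟩
    rw [hPa2i i hia hib]
  rw [hrest, ← mul_assoc, ← mul_assoc]
  congr 1
  -- the key local exchange at {a, b}
  rw [hPa2a, hPa2b, hcov]
  set A := D₁.Pa {a} with hA
  have hpos := hp.1
  have m1 : marginal p A v ≠ 0 := (marginal_pos hpos A v).ne'
  have m2 : marginal p (A ∪ {a}) v ≠ 0 := (marginal_pos hpos _ v).ne'
  have m3 : marginal p (A ∪ {b}) v ≠ 0 := (marginal_pos hpos _ v).ne'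
  have e1 : ({a} : Set V) ∪ A = A ∪ {a} := Set.union_comm _ _
  have e2 : ({b} : Set V) ∪ (A ∪ {a}) = ({a} : Set V) ∪ (A ∪ {b}) := by
    ext x; simp only [Set.mem_union, Set.mem_singleton_iff]; tauto
  have e3 : ({b} : Set V) ∪ A = A ∪ {b} := Set.union_comm _ _
  have m2' : marginal p (insert a A) v ≠ 0 := by
    rw [← Set.union_singleton]; exact m2
  have m3' : marginal p (insert b A) v ≠ 0 := by
    rw [← Set.union_singleton]; exact m3
  simp only [condP]
  rw [e1, e2, e3]
  field_simp
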